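/- Let α = 2√3 − 3 and γ = (3−√3)/2. For all real x₁, x₂ ≥ 0 with x₁ + x₂ = 1 and x₂ < 1: (i) x₁²x₂ / (2(1 − x₂³)) ≤ α/6; and (ii) if moreover x₁ ∈ [1/2, 1], then (1/2)·x₁²x₂ + (α/6)·x₂³ ≤ α/6 − (1/4)·(x₁ − γ)². -/
import Mathlib


open scoped Classical

noncomputable section

/-- The constant `α = 2√3 − 3`. -/
def alphaC : ℝ := 2 * Real.sqrt 3 - 3

/-- The constant `γ = (3 − √3)/2`. -/
def gammaC : ℝ := (3 - Real.sqrt 3) / 2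

/-- **Fact (elementary inequalities for `α = 2√3 − 3` and `γ = (3−√3)/2`).**
For `x₁, x₂ ≥ 0` with `x₁ + x₂ = 1` and `x₂ < 1`:
(i) `x₁²x₂ / (2(1 − x₂³)) ≤ α/6`; and
(ii) if `x₁ ∈ [1/2, 1]` then `x₁²x₂/2 + (α/6)x₂³ ≤ α/6 − (x₁ − γ)²/4`. -/
theorem fact_inequalities (x₁ x₂ : ℝ) (h₁ : 0 ≤ x₁) (h₂ : 0 ≤ x₂)
    (hsum : x₁ + x₂ = 1) (hlt : x₂ < 1) :
    x₁ ^ 2 * x₂ / (2 * (1 - x₂ ^ 3)) ≤ alphaC / 6 ∧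
    (x₁ ∈ Set.Icc (1 / 2 : ℝ) 1 →
      (1 / 2) * x₁ ^ 2 * x₂ + (alphaC / 6) * x₂ ^ 3 ≤
        alphaC / 6 - (1 / 4) * (x₁ - gammaC) ^ 2) := by
  have hs : Real.sqrt 3 ^ 2 = 3 := Real.sq_sqrt (by norm_num)
  have hs1 : 1 ≤ Real.sqrt 3 := by nlinarith [Real.sqrt_nonneg 3]
  have hs2 : Real.sqrt 3 ≤ 2 := by nlinarith [Real.sqrt_nonneg 3]
  have hx1 : x₁ = 1 - x₂ := by linarith
  constructor
  · have hden : 0 < 2 * (1 - x₂ ^ 3) := by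
      nlinarith [pow_lt_one₀ h₂ hlt (by norm_num : 3 ≠ 0)]
    rw [div_le_iff₀ hden, alphaC]
    have key : (2 * Real.sqrt 3 - 3) / 6 * (2 * (1 - x₂ ^ 3)) - x₁ ^ 2 * x₂ =
        x₁ * (Real.sqrt 3 / 6) * (2 * x₂ - Real.sqrt 3 + 1) ^ 2 := by
      subst hx1
      linear_combination (-Real.sqrt 3 / 6 + Real.sqrt 3 * x₂ / 6 + x₂ / 3 + 1 / 3
        - 2 * x₂ ^ 2 / 3) * hs
    nlinarith [mul_nonneg (mul_nonneg h₁ (by positivity : (0:ℝ) ≤ Real.sqrt 3 / 6))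
      (sq_nonneg (2 * x₂ - Real.sqrt 3 + 1))]
  · rintro ⟨hl, hr⟩
    rw [alphaC, gammaC]
    have h4 : 0 ≤ x₁ - Real.sqrt 3 / 4 := by linarith
    have key : (2 * Real.sqrt 3 - 3) / 6 - 1 / 4 * (x₁ - (3 - Real.sqrt 3) / 2) ^ 2
        - (1 / 2 * x₁ ^ 2 * x₂ + (2 * Real.sqrt 3 - 3) / 6 * x₂ ^ 3) =
        Real.sqrt 3 / 3 * (x₁ - (3 - Real.sqrt 3) / 2) ^ 2 * (x₁ - Real.sqrt 3 / 4) := by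
      have hx2 : x₂ = 1 - x₁ := by linarith
      subst hx2
      linear_combination (Real.sqrt 3 ^ 2 / 48 - Real.sqrt 3 / 8 + 3 / 16
        - x₁ ^ 2 / 4 + x₁ / 4) * hs
    nlinarith [mul_nonneg (mul_nonneg (by positivity : (0:ℝ) ≤ Real.sqrt 3 / 3)
      (sq_nonneg (x₁ - (3 - Real.sqrt 3) / 2))) h4]
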